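/- Let K be a field and G = (V, E) a finite connected simple graph admitting a vertex partition V = {v0} ⊔ V1 ⊔ V2 that makes v0 a fat nexus. Let W ⊆ K^E be the K-span of the incidence vectors of all vertices of G, and for i = 1, 2 let W_i ⊆ K^E be the K-span of the incidence vectors of the vertices in V_i. Then W ⋆ W is the internal direct sum of the three subspaces W1 ⋆ W1, W1 ⋆ W2 and W2 ⋆ W2; that is, their sum equals W ⋆ W and each of the three subspaces intersects the sum of the other two trivially. -/

import Mathlib

open Pointwise

/-- The incidence vector of a vertex `v` with respect to an orientation
`(src, tgt)` of the edges of a simple graph `G`. -/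
noncomputable def incVec (K : Type*) [Field K] {V : Type*} [DecidableEq V]
    {G : SimpleGraph V} (src tgt : G.edgeSet → V) (v : V) : G.edgeSet → K :=
  fun e => if v = tgt e then 1 else if v = src e then -1 else 0

/-- The Hadamard product `A ⋆ B` of two subspaces `A, B ⊆ K^E`: the span of all
componentwise products `a ⋆ b` with `a ∈ A` and `b ∈ B`.  (Multiplication on
`E → K` is the componentwise one.) -/
def hadamardSpan {K E : Type*} [Field K] (A B : Submodule K (E → K)) :
    Submodule K (E → K) :=
  Submodule.span K {x : E → K | ∃ a ∈ A, ∃ b ∈ B, x = a * b}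

lemma hadamardSpan_eq_mul {K E : Type*} [Field K] (A B : Submodule K (E → K)) :
    hadamardSpan A B = A * B := by
  rw [hadamardSpan, Submodule.mul_eq_span_mul_set]
  congr 1
  ext x
  rw [Set.mem_mul]
  constructor
  · rintro ⟨a, ha, b, hb, rfl⟩; exact ⟨a, ha, b, hb, rfl⟩
  · rintro ⟨a, ha, b, hb, rfl⟩; exact ⟨a, ha, b, hb, rfl⟩

lemma hadamardSpan_span_span {K E : Type*} [Field K] (S T : Set (E → K)) :
    hadamardSpan (Submodule.span K S) (Submodule.span K T) =
      Submodule.span K (S * T) := by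
  rw [hadamardSpan_eq_mul, Submodule.span_mul_span]

section Aux

set_option linter.unusedSectionVars false

variable {K V : Type*} [Field K] [Fintype V] [DecidableEq V]
  {G : SimpleGraph V} (src tgt : G.edgeSet → V)

lemma incVec_eq_zero (v : V) (e : G.edgeSet) (h1 : v ≠ src e) (h2 : v ≠ tgt e) :
    incVec K src tgt v e = 0 := by simp [incVec, h1, h2]

lemma incVec_sq (v : V) (e : G.edgeSet) :
    incVec K src tgt v e * incVec K src tgt v e =
      if v = src e ∨ v = tgt e then 1 else 0 := by
  simp only [incVec]
  by_cases h1 : v = tgt e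
  · rw [if_pos h1, if_pos (Or.inr h1), one_mul]
  · by_cases h2 : v = src e
    · rw [if_neg h1, if_pos h2, if_pos (Or.inl h2)]; norm_num
    · rw [if_neg h1, if_neg h2, if_neg (by tauto), mul_zero]

/-- Value of a generator `ι a * ι b` (with `a b ∈ A`) on an edge whose unique
endpoint in `A` is `u`. -/
lemma gen_val (A : Set V) (u a b : V) (ha : a ∈ A) (hb : b ∈ A) (e : G.edgeSet)
    (he : (src e = u ∧ tgt e ∉ A) ∨ (tgt e = u ∧ src e ∉ A)) :
    (incVec K src tgt a * incVec K src tgt b) e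
      = if a = u ∧ b = u then 1 else 0 := by
  have key : ∀ c ∈ A, c ≠ u → incVec K src tgt c e = 0 := by
    intro c hc hcu
    rcases he with ⟨h1, h2⟩ | ⟨h1, h2⟩
    · exact incVec_eq_zero src tgt c e (h1 ▸ hcu) (fun h => h2 (h ▸ hc))
    · exact incVec_eq_zero src tgt c e (fun h => h2 (h ▸ hc)) (h1 ▸ hcu)
  by_cases hab : a = u ∧ b = u
  · obtain ⟨rfl, hb'⟩ := hab
    subst hb'
    rw [if_pos ⟨rfl, rfl⟩, Pi.mul_apply, incVec_sq]
    rcases he with ⟨h1, _⟩ | ⟨h1, _⟩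
    · rw [if_pos (Or.inl h1.symm)]
    · rw [if_pos (Or.inr h1.symm)]
  · rw [if_neg hab, Pi.mul_apply]
    rcases (not_and_or.mp hab) with h | h
    · rw [key a ha h, zero_mul]
    · rw [key b hb h, mul_zero]

/-- Elements of `span ((ι '' A) * (ι '' A))` take equal values on any two edges
whose unique endpoint in `A` is the same vertex `u`. -/
lemma span_prod_eval_eq (A : Set V) (u : V) (e e' : G.edgeSet)
    (he : (src e = u ∧ tgt e ∉ A) ∨ (tgt e = u ∧ src e ∉ A))
    (he' : (src e' = u ∧ tgt e' ∉ A) ∨ (tgt e' = u ∧ src e' ∉ A))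
    (x : G.edgeSet → K)
    (hx : x ∈ Submodule.span K
      ((incVec K src tgt '' A) * (incVec K src tgt '' A))) :
    x e = x e' := by
  induction hx using Submodule.span_induction with
  | mem g hg =>
    rw [Set.mem_mul] at hg
    obtain ⟨a', ⟨a, ha, rfl⟩, b', ⟨b, hb, rfl⟩, rfl⟩ := hg
    rw [gen_val src tgt A u a b ha hb e he, gen_val src tgt A u a b ha hb e' he']
  | zero => rfl
  | add y z hy hz ihy ihz => simp only [Pi.add_apply, ihy, ihz]
  | smul c y hy ihy => simp only [Pi.smul_apply, ihy]

/-- Elements of `span ((ι '' A) * (ι '' B))` vanish at edges where every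
generator vanishes. -/
lemma span_prod_vanish (A B : Set V) (e : G.edgeSet)
    (h : ∀ a ∈ A, ∀ b ∈ B, (incVec K src tgt a * incVec K src tgt b) e = 0)
    (x : G.edgeSet → K)
    (hx : x ∈ Submodule.span K
      ((incVec K src tgt '' A) * (incVec K src tgt '' B))) :
    x e = 0 := by
  induction hx using Submodule.span_induction with
  | mem g hg =>
    rw [Set.mem_mul] at hg
    obtain ⟨a', ⟨a, ha, rfl⟩, b', ⟨b, hb, rfl⟩, rfl⟩ := hg
    exact h a ha b hb
  | zero => rfl
  | add y z hy hz ihy ihz => simp only [Pi.add_apply, ihy, ihz, add_zero]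
  | smul c y hy ihy => simp only [Pi.smul_apply, ihy, smul_zero]

end Aux

theorem stmt_1 {K V : Type*} [Field K] [Fintype V] [DecidableEq V]
    (G : SimpleGraph V) (hconn : G.Connected)
    (src tgt : G.edgeSet → V)
    (horient : ∀ e : G.edgeSet, (e : Sym2 V) = Sym2.mk (src e) (tgt e))
    (v0 : V) (V1 V2 : Set V)
    (hv01 : v0 ∉ V1) (hv02 : v0 ∉ V2) (hdisj : V1 ∩ V2 = ∅)
    (hcover : {v0} ∪ V1 ∪ V2 = Set.univ)
    (hne1 : V1.Nonempty) (hne2 : V2.Nonempty)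
    (hfat : ∀ a ∈ V1, ∀ b ∈ V2, G.Adj a b →
      a ∈ insert v0 (G.neighborSet v0) ∧ b ∈ insert v0 (G.neighborSet v0))
    (hcone : insert v0 (G.neighborSet v0) = Set.univ → V1.ncard ≠ V2.ncard)
    (W W1 W2 : Submodule K (G.edgeSet → K))
    (hW : W = Submodule.span K (Set.range (incVec K src tgt)))
    (hW1 : W1 = Submodule.span K (incVec K src tgt '' V1))
    (hW2 : W2 = Submodule.span K (incVec K src tgt '' V2)) :
    hadamardSpan W1 W1 ⊔ hadamardSpan W1 W2 ⊔ hadamardSpan W2 W2 =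
      hadamardSpan W W ∧
    hadamardSpan W1 W1 ⊓ (hadamardSpan W1 W2 ⊔ hadamardSpan W2 W2) = ⊥ ∧
    hadamardSpan W1 W2 ⊓ (hadamardSpan W1 W1 ⊔ hadamardSpan W2 W2) = ⊥ ∧
    hadamardSpan W2 W2 ⊓ (hadamardSpan W1 W1 ⊔ hadamardSpan W1 W2) = ⊥ := by
  classical
  set ι : V → G.edgeSet → K := incVec K src tgt with hι
  -- basic facts about edges
  have hadj : ∀ e : G.edgeSet, G.Adj (src e) (tgt e) := by
    intro e
    have := e.prop
    rw [horient e] at this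
    exact this
  have hst : ∀ e : G.edgeSet, src e ≠ tgt e := fun e => (hadj e).ne
  -- each vertex is in exactly one class
  have hclass : ∀ w : V, w = v0 ∨ w ∈ V1 ∨ w ∈ V2 := by
    intro w
    have : w ∈ ({v0} ∪ V1 ∪ V2 : Set V) := hcover ▸ Set.mem_univ w
    rcases this with (h | h) | h
    · exact Or.inl h
    · exact Or.inr (Or.inl h)
    · exact Or.inr (Or.inr h)
  have h12 : ∀ w, w ∈ V1 → w ∉ V2 := by
    intro w h1 h2
    have : w ∈ V1 ∩ V2 := ⟨h1, h2⟩
    rw [hdisj] at this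
    exact this
  have h21 : ∀ w, w ∈ V2 → w ∉ V1 := fun w h2 h1 => h12 w h1 h2
  -- endpoints of an edge are the src and tgt
  have hendpt : ∀ (e : G.edgeSet) (w z : V), (e : Sym2 V) = s(w, z) →
      (src e = w ∧ tgt e = z) ∨ (src e = z ∧ tgt e = w) := by
    intro e w z h
    have := (horient e).symm.trans h
    replace this := (Sym2.mk_eq_mk_iff (p := (src e, tgt e)) (q := (w, z))).mp this
    rcases this with h' | h'
    · exact Or.inl ⟨(congrArg Prod.fst h' : _), (congrArg Prod.snd h' : _)⟩
    · exact Or.inr ⟨(congrArg Prod.fst h' : _), (congrArg Prod.snd h' : _)⟩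
  -- fat nexus, reformulated
  have hfat1 : ∀ a ∈ V1, ∀ b ∈ V2, G.Adj a b → G.Adj v0 a := by
    intro a ha b hb h
    rcases (hfat a ha b hb h).1 with h' | h'
    · exact absurd (h' ▸ ha) hv01
    · exact h'
  have hfat2 : ∀ a ∈ V2, ∀ b ∈ V1, G.Adj a b → G.Adj v0 a := by
    intro a ha b hb h
    rcases (hfat b hb a ha h.symm).2 with h' | h'
    · exact absurd (h' ▸ ha) hv02
    · exact h'
  -- sum of all incidence vectors is 0
  have hsum : ∑ v : V, ι v = 0 := by
    funext e
    rw [Finset.sum_apply]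
    have key : ∀ v : V, ι v e = (if v = tgt e then (1:K) else 0)
        + (if v = src e then (-1:K) else 0) := by
      intro v
      simp only [hι, incVec]
      by_cases h1 : v = tgt e
      · rw [if_pos h1, if_pos h1,
          if_neg (fun h2 : v = src e => hst e (h2 ▸ h1 ▸ rfl)), add_zero]
      · rw [if_neg h1, if_neg h1, zero_add]
    simp only [key, Finset.sum_add_distrib, Finset.sum_ite_eq',
      Finset.mem_univ, if_true]
    simp
  -- W = W1 ⊔ W2
  have hWsup : W = W1 ⊔ W2 := by
    rw [hW, hW1, hW2, ← Submodule.span_union, ← Set.image_union]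
    apply le_antisymm
    · rw [Submodule.span_le]
      rintro _ ⟨v, rfl⟩
      rcases hclass v with rfl | hv | hv
      · -- ι v0 = - ∑ over V1 ∪ V2
        have hsplit := hsum
        rw [← Finset.sum_filter_add_sum_filter_not Finset.univ
          (fun v => v ∈ V1 ∪ V2)] at hsplit
        have hrest : Finset.univ.filter (fun v => ¬ v ∈ V1 ∪ V2) = {v} := by
          ext w
          simp only [Finset.mem_filter, Finset.mem_univ, true_and,
            Finset.mem_singleton, Set.mem_union]
          constructor
          · intro h
            rcases hclass w with rfl | h1 | h2
            · rfl
            · exact absurd (Or.inl h1) h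
            · exact absurd (Or.inr h2) h
          · rintro rfl
            rintro (h | h)
            · exact hv01 h
            · exact hv02 h
        rw [hrest, Finset.sum_singleton] at hsplit
        have hv0 : ι v = -∑ w ∈ Finset.univ.filter (fun v => v ∈ V1 ∪ V2), ι w :=
          eq_neg_of_add_eq_zero_right hsplit
        rw [SetLike.mem_coe, hv0]
        exact neg_mem (Submodule.sum_mem _ (fun w hw => Submodule.subset_span
          ⟨w, (Finset.mem_filter.mp hw).2, rfl⟩))
      · exact Submodule.subset_span ⟨v, Or.inl hv, rfl⟩
      · exact Submodule.subset_span ⟨v, Or.inr hv, rfl⟩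
    · rw [Submodule.span_le]
      rintro _ ⟨v, _, rfl⟩
      exact Submodule.subset_span ⟨v, rfl⟩
  -- names for the three product spans
  have hP11 : hadamardSpan W1 W1 = Submodule.span K ((ι '' V1) * (ι '' V1)) := by
    rw [hW1, hadamardSpan_span_span]
  have hP12 : hadamardSpan W1 W2 = Submodule.span K ((ι '' V1) * (ι '' V2)) := by
    rw [hW1, hW2, hadamardSpan_span_span]
  have hP22 : hadamardSpan W2 W2 = Submodule.span K ((ι '' V2) * (ι '' V2)) := by
    rw [hW2, hadamardSpan_span_span]
  set P11 := Submodule.span K ((ι '' V1) * (ι '' V1)) with hP11d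
  set P12 := Submodule.span K ((ι '' V1) * (ι '' V2)) with hP12d
  set P22 := Submodule.span K ((ι '' V2) * (ι '' V2)) with hP22d
  -- vanishing lemmas
  have Zvan : ∀ (A : Set V) (x : G.edgeSet → K),
      x ∈ Submodule.span K ((ι '' A) * (ι '' A)) →
      ∀ e : G.edgeSet, src e ∉ A → tgt e ∉ A → x e = 0 := by
    intro A x hx e hs ht
    refine span_prod_vanish src tgt A A e (fun a ha b hb => ?_) x hx
    rw [Pi.mul_apply, incVec_eq_zero src tgt a e
      (fun h => hs (h ▸ ha)) (fun h => ht (h ▸ ha)), zero_mul]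
  have Z12van : ∀ (x : G.edgeSet → K), x ∈ P12 →
      ∀ e : G.edgeSet, (src e ∉ V2 ∧ tgt e ∉ V2) ∨ (src e ∉ V1 ∧ tgt e ∉ V1) →
      x e = 0 := by
    intro x hx e hcond
    refine span_prod_vanish src tgt V1 V2 e (fun a ha b hb => ?_) x hx
    rcases hcond with ⟨hs, ht⟩ | ⟨hs, ht⟩
    · rw [Pi.mul_apply, incVec_eq_zero src tgt b e
        (fun h => hs (h ▸ hb)) (fun h => ht (h ▸ hb)), mul_zero]
    · rw [Pi.mul_apply, incVec_eq_zero src tgt a e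
        (fun h => hs (h ▸ ha)) (fun h => ht (h ▸ ha)), zero_mul]
  -- main lemma: an element of span((ι''A)²) vanishing on edges at v0 and on
  -- edges inside A is zero
  have main : ∀ (A B : Set V), v0 ∉ A →
      (∀ w, w = v0 ∨ w ∈ A ∨ w ∈ B) →
      (∀ a ∈ A, ∀ b ∈ B, G.Adj a b → G.Adj v0 a) →
      ∀ x ∈ Submodule.span K ((ι '' A) * (ι '' A)),
      (∀ e : G.edgeSet, src e = v0 ∨ tgt e = v0 → x e = 0) →
      (∀ e : G.edgeSet, src e ∈ A → tgt e ∈ A → x e = 0) →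
      x = 0 := by
    intro A B hv0A hcl hfatA x hx H1 H2
    funext e
    show x e = (0 : K)
    -- treat the case of exactly one endpoint u ∈ A with other endpoint in B
    have transfer : ∀ u : V, u ∈ A →
        ((src e = u ∧ tgt e ∉ A) ∨ (tgt e = u ∧ src e ∉ A)) →
        G.Adj v0 u → x e = 0 := by
      intro u hu he hadj0
      set e' : G.edgeSet := ⟨s(u, v0), by rw [SimpleGraph.mem_edgeSet]; exact hadj0.symm⟩
        with he'def
      have he'sym : (e' : Sym2 V) = s(u, v0) := rfl
      have he' : (src e' = u ∧ tgt e' ∉ A) ∨ (tgt e' = u ∧ src e' ∉ A) := by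
        rcases hendpt e' u v0 he'sym with ⟨h1, h2⟩ | ⟨h1, h2⟩
        · exact Or.inl ⟨h1, h2 ▸ hv0A⟩
        · exact Or.inr ⟨h2, h1 ▸ hv0A⟩
      have hx0 : x e' = 0 := by
        apply H1 e'
        rcases hendpt e' u v0 he'sym with ⟨h1, h2⟩ | ⟨h1, h2⟩
        · exact Or.inr h2
        · exact Or.inl h1
      rw [span_prod_eval_eq src tgt A u e e' he he' x hx, hx0]
    by_cases hs : src e ∈ A <;> by_cases ht : tgt e ∈ A
    · exact H2 e hs ht
    · -- src e ∈ A, tgt e ∉ A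
      rcases hcl (tgt e) with h | h | h
      · exact H1 e (Or.inr h)
      · exact absurd h ht
      · exact transfer (src e) hs (Or.inl ⟨rfl, ht⟩)
          (hfatA (src e) hs (tgt e) h (hadj e))
    · -- tgt e ∈ A, src e ∉ A
      rcases hcl (src e) with h | h | h
      · exact H1 e (Or.inl h)
      · exact absurd h hs
      · exact transfer (tgt e) ht (Or.inr ⟨rfl, hs⟩)
          (hfatA (tgt e) ht (src e) h (hadj e).symm)
    · exact Zvan A x hx e hs ht
  have hcl1 : ∀ w, w = v0 ∨ w ∈ V1 ∨ w ∈ V2 := hclass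
  have hcl2 : ∀ w, w = v0 ∨ w ∈ V2 ∨ w ∈ V1 := by
    intro w; rcases hclass w with h | h | h
    · exact Or.inl h
    · exact Or.inr (Or.inr h)
    · exact Or.inr (Or.inl h)
  refine ⟨?_, ?_, ?_, ?_⟩
  · -- sup equality
    rw [hadamardSpan_eq_mul, hadamardSpan_eq_mul, hadamardSpan_eq_mul,
      hadamardSpan_eq_mul, hWsup, Submodule.mul_sup, Submodule.sup_mul,
      Submodule.sup_mul, mul_comm W2 W1, sup_assoc, sup_assoc,
      ← sup_assoc (W1 * W2) (W1 * W2), sup_idem]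
  · -- P11 ⊓ (P12 ⊔ P22) = ⊥
    rw [hP11, hP12, hP22, Submodule.eq_bot_iff]
    rintro x ⟨hx1, hx2⟩
    obtain ⟨y, hy, z, hz, hyz⟩ := Submodule.mem_sup.mp hx2
    have hxe : ∀ e : G.edgeSet, x e = y e + z e := by
      intro e; rw [← hyz]; rfl
    refine main V1 V2 hv01 hcl1 hfat1 x hx1 ?_ ?_
    · intro e h0
      by_cases hs : src e ∈ V1 <;> by_cases ht : tgt e ∈ V1
      · exact absurd h0 (by
          rintro (h | h)
          · exact hv01 (h ▸ hs)
          · exact hv01 (h ▸ ht))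
      · -- src ∈ V1, so tgt = v0
        have htv : tgt e = v0 := by
          rcases h0 with h | h
          · exact absurd (h ▸ hs) hv01
          · exact h
        rw [hxe e, Z12van y hy e (Or.inl ⟨h12 _ hs, htv ▸ hv02⟩),
          Zvan V2 z hz e (h12 _ hs) (htv ▸ hv02), add_zero]
      · have hsv : src e = v0 := by
          rcases h0 with h | h
          · exact h
          · exact absurd (h ▸ ht) hv01
        rw [hxe e, Z12van y hy e (Or.inl ⟨hsv ▸ hv02, h12 _ ht⟩),
          Zvan V2 z hz e (hsv ▸ hv02) (h12 _ ht), add_zero]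
      · exact Zvan V1 x hx1 e hs ht
    · intro e hs ht
      rw [hxe e, Z12van y hy e (Or.inl ⟨h12 _ hs, h12 _ ht⟩),
        Zvan V2 z hz e (h12 _ hs) (h12 _ ht), add_zero]
  · -- P12 ⊓ (P11 ⊔ P22) = ⊥
    rw [hP11, hP12, hP22, Submodule.eq_bot_iff]
    rintro x ⟨hx1, hx2⟩
    obtain ⟨a, ha, b, hb, hab⟩ := Submodule.mem_sup.mp hx2
    have hae : ∀ e : G.edgeSet, a e = x e - b e := by
      intro e; rw [← hab]; show a e = a e + b e - b e; ring
    have hbe : ∀ e : G.edgeSet, b e = x e - a e := by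
      intro e; rw [← hab]; show b e = a e + b e - a e; ring
    have ha0 : a = 0 := by
      refine main V1 V2 hv01 hcl1 hfat1 a ha ?_ ?_
      · intro e h0
        by_cases hs : src e ∈ V1 <;> by_cases ht : tgt e ∈ V1
        · exact absurd h0 (by
            rintro (h | h)
            · exact hv01 (h ▸ hs)
            · exact hv01 (h ▸ ht))
        · have htv : tgt e = v0 := by
            rcases h0 with h | h
            · exact absurd (h ▸ hs) hv01
            · exact h
          rw [hae e, Z12van x hx1 e (Or.inl ⟨h12 _ hs, htv ▸ hv02⟩),
            Zvan V2 b hb e (h12 _ hs) (htv ▸ hv02), sub_zero]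
        · have hsv : src e = v0 := by
            rcases h0 with h | h
            · exact h
            · exact absurd (h ▸ ht) hv01
          rw [hae e, Z12van x hx1 e (Or.inl ⟨hsv ▸ hv02, h12 _ ht⟩),
            Zvan V2 b hb e (hsv ▸ hv02) (h12 _ ht), sub_zero]
        · exact Zvan V1 a ha e hs ht
      · intro e hs ht
        rw [hae e, Z12van x hx1 e (Or.inl ⟨h12 _ hs, h12 _ ht⟩),
          Zvan V2 b hb e (h12 _ hs) (h12 _ ht), sub_zero]
    have hb0 : b = 0 := by
      refine main V2 V1 hv02 hcl2 hfat2 b hb ?_ ?_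
      · intro e h0
        by_cases hs : src e ∈ V2 <;> by_cases ht : tgt e ∈ V2
        · exact absurd h0 (by
            rintro (h | h)
            · exact hv02 (h ▸ hs)
            · exact hv02 (h ▸ ht))
        · have htv : tgt e = v0 := by
            rcases h0 with h | h
            · exact absurd (h ▸ hs) hv02
            · exact h
          rw [hbe e, Z12van x hx1 e (Or.inr ⟨h21 _ hs, htv ▸ hv01⟩),
            Zvan V1 a ha e (h21 _ hs) (htv ▸ hv01), sub_zero]
        · have hsv : src e = v0 := by
            rcases h0 with h | h
            · exact h
            · exact absurd (h ▸ ht) hv02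
          rw [hbe e, Z12van x hx1 e (Or.inr ⟨hsv ▸ hv01, h21 _ ht⟩),
            Zvan V1 a ha e (hsv ▸ hv01) (h21 _ ht), sub_zero]
        · exact Zvan V2 b hb e hs ht
      · intro e hs ht
        rw [hbe e, Z12van x hx1 e (Or.inr ⟨h21 _ hs, h21 _ ht⟩),
          Zvan V1 a ha e (h21 _ hs) (h21 _ ht), sub_zero]
    rw [← hab, ha0, hb0, add_zero]
  · -- P22 ⊓ (P11 ⊔ P12) = ⊥
    rw [hP11, hP12, hP22, Submodule.eq_bot_iff]
    rintro x ⟨hx1, hx2⟩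
    obtain ⟨y, hy, z, hz, hyz⟩ := Submodule.mem_sup.mp hx2
    have hxe : ∀ e : G.edgeSet, x e = y e + z e := by
      intro e; rw [← hyz]; rfl
    refine main V2 V1 hv02 hcl2 hfat2 x hx1 ?_ ?_
    · intro e h0
      by_cases hs : src e ∈ V2 <;> by_cases ht : tgt e ∈ V2
      · exact absurd h0 (by
          rintro (h | h)
          · exact hv02 (h ▸ hs)
          · exact hv02 (h ▸ ht))
      · have htv : tgt e = v0 := by
          rcases h0 with h | h
          · exact absurd (h ▸ hs) hv02
          · exact h
        rw [hxe e, Zvan V1 y hy e (h21 _ hs) (htv ▸ hv01),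
          Z12van z hz e (Or.inr ⟨h21 _ hs, htv ▸ hv01⟩), add_zero]
      · have hsv : src e = v0 := by
          rcases h0 with h | h
          · exact h
          · exact absurd (h ▸ ht) hv02
        rw [hxe e, Zvan V1 y hy e (hsv ▸ hv01) (h21 _ ht),
          Z12van z hz e (Or.inr ⟨hsv ▸ hv01, h21 _ ht⟩), add_zero]
      · exact Zvan V2 x hx1 e hs ht
    · intro e hs ht
      rw [hxe e, Zvan V1 y hy e (h21 _ hs) (h21 _ ht),
        Z12van z hz e (Or.inr ⟨h21 _ hs, h21 _ ht⟩), add_zero]
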